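/- Let n ≥ 3 be an odd integer, let 𝔨 > 0 and 𝔩 ∈ ℝ. Then the improper oscillatory integral lim_{R→∞} ∫_{-R}^{R} exp(i(𝔨 w^n − 𝔩 w)) dw exists and equals 2 Re[ e^{iπ/(2n)} ∫_0^∞ exp(−𝔨 ξ^n + e^{-iπ(n−1)/(2n)} 𝔩 ξ) dξ ]; moreover the integral inside the real part converges absolutely. -/

import Mathlib

open MeasureTheory Real Filter Complex

lemma expI_hasDerivAt (θ : ℝ) :
    HasDerivAt (fun θ : ℝ => Complex.exp (θ * I)) (I * Complex.exp (θ * I)) θ := by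
  have := (Complex.hasDerivAt_exp ((θ:ℂ) * I)).comp θ
    ((Complex.ofRealCLM.hasDerivAt (x := θ)).mul_const I)
  simpa [mul_comm, Function.comp_def] using this

lemma sector_step1 (g g' : ℂ → ℂ) (hg : ∀ z, HasDerivAt g (g' z) z)
    (hgc : Continuous g) (hg'c : Continuous g') (α : ℝ) (ξ : ℝ) :
    Complex.exp (↑α * I) * g (Complex.exp (↑α * I) * ξ) - g ξ =
      ∫ θ in (0:ℝ)..α, I * (Complex.exp (↑θ * I) * g (Complex.exp (↑θ * I) * ξ)
        + ↑ξ * Complex.exp (↑θ * I) ^ 2 * g' (Complex.exp (↑θ * I) * ξ)) := by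
  have key : ∀ θ : ℝ, HasDerivAt (fun θ : ℝ => Complex.exp (↑θ * I) * g (Complex.exp (↑θ * I) * ξ))
      (I * (Complex.exp (↑θ * I) * g (Complex.exp (↑θ * I) * ξ)
        + ↑ξ * Complex.exp (↑θ * I) ^ 2 * g' (Complex.exp (↑θ * I) * ξ))) θ := by
    intro θ
    have h1 := expI_hasDerivAt θ
    have h2 : HasDerivAt (fun θ : ℝ => g (Complex.exp (↑θ * I) * ξ))
        (g' (Complex.exp (↑θ * I) * ξ) * (I * Complex.exp (↑θ * I) * ξ)) θ := by
      have := (hg (Complex.exp (↑θ * I) * ξ)).comp θ (h1.mul_const (ξ : ℂ))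
      simpa [mul_assoc, Function.comp_def] using this
    have h3 := h1.mul h2
    have heq : I * Complex.exp (↑θ * I) * g (Complex.exp (↑θ * I) * ξ)
        + Complex.exp (↑θ * I) * (g' (Complex.exp (↑θ * I) * ξ) * (I * Complex.exp (↑θ * I) * ξ))
        = I * (Complex.exp (↑θ * I) * g (Complex.exp (↑θ * I) * ξ)
        + ↑ξ * Complex.exp (↑θ * I) ^ 2 * g' (Complex.exp (↑θ * I) * ξ)) := by ring
    rw [heq] at h3
    exact h3
  have hcont : Continuous (fun θ : ℝ => I * (Complex.exp (↑θ * I) * g (Complex.exp (↑θ * I) * ξ)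
      + ↑ξ * Complex.exp (↑θ * I) ^ 2 * g' (Complex.exp (↑θ * I) * ξ))) := by
    have he : Continuous (fun θ : ℝ => Complex.exp (↑θ * I)) :=
      Complex.continuous_exp.comp (Complex.continuous_ofReal.mul continuous_const)
    exact continuous_const.mul (((he.mul (hgc.comp (he.mul continuous_const)))).add
      ((continuous_const.mul (he.pow 2)).mul (hg'c.comp (he.mul continuous_const))))
  have := intervalIntegral.integral_eq_sub_of_hasDerivAt (a := 0) (b := α)
    (fun θ _ => key θ) (hcont.intervalIntegrable _ _)
  rw [this]
  simp

lemma sector_step3 (g g' : ℂ → ℂ) (hg : ∀ z, HasDerivAt g (g' z) z)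
    (hgc : Continuous g) (hg'c : Continuous g') (R : ℝ) (θ : ℝ) :
    (∫ ξ in (0:ℝ)..R, I * (Complex.exp (↑θ * I) * g (Complex.exp (↑θ * I) * ξ)
        + ↑ξ * Complex.exp (↑θ * I) ^ 2 * g' (Complex.exp (↑θ * I) * ξ)))
      = I * ↑R * Complex.exp (↑θ * I) * g (Complex.exp (↑θ * I) * R) := by
  set e := Complex.exp (↑θ * I) with he
  have key : ∀ ξ : ℝ, HasDerivAt (fun ξ : ℝ => I * ξ * e * g (e * ξ))
      (I * (e * g (e * ξ) + ↑ξ * e ^ 2 * g' (e * ξ))) ξ := by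
    intro ξ
    have h1 : HasDerivAt (fun ξ : ℝ => (I * ξ * e : ℂ)) (I * e) ξ := by
      have := ((Complex.ofRealCLM.hasDerivAt (x := ξ)).const_mul I).mul_const e
      simpa using this
    have h2 : HasDerivAt (fun ξ : ℝ => g (e * ξ)) (g' (e * ξ) * e) ξ := by
      have := (hg (e * ξ)).comp ξ ((Complex.ofRealCLM.hasDerivAt (x := ξ)).const_mul e)
      simpa [mul_assoc, Function.comp_def] using this
    have h3 := h1.mul h2
    have heq : I * e * g (e * ξ) + I * ↑ξ * e * (g' (e * ξ) * e)
        = I * (e * g (e * ξ) + ↑ξ * e ^ 2 * g' (e * ξ)) := by ring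
    rw [heq] at h3
    exact h3
  have he' : Continuous (fun ξ : ℝ => (e * ξ : ℂ)) :=
    continuous_const.mul Complex.continuous_ofReal
  have hcont : Continuous (fun ξ : ℝ => I * (e * g (e * ξ) + ↑ξ * e ^ 2 * g' (e * ξ))) :=
    continuous_const.mul ((continuous_const.mul (hgc.comp he')).add
      (((Complex.continuous_ofReal.mul continuous_const)).mul (hg'c.comp he')))
  have := intervalIntegral.integral_eq_sub_of_hasDerivAt (a := 0) (b := R)
    (fun ξ _ => key ξ) (hcont.intervalIntegrable _ _)
  rw [this]
  simp

set_option maxHeartbeats 1000000 in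
lemma sector_eq (g g' : ℂ → ℂ) (hg : ∀ z, HasDerivAt g (g' z) z)
    (hgc : Continuous g) (hg'c : Continuous g') (R α : ℝ) (hR : 0 ≤ R) (hα : 0 ≤ α) :
    (∫ ξ in (0:ℝ)..R, Complex.exp (↑α * I) * g (Complex.exp (↑α * I) * ξ)) -
      (∫ ξ in (0:ℝ)..R, g ξ) =
    ∫ θ in (0:ℝ)..α, I * ↑R * Complex.exp (↑θ * I) * g (Complex.exp (↑θ * I) * R) := by
  set v : ℝ → ℝ → ℂ := fun θ ξ => I * (Complex.exp (↑θ * I) * g (Complex.exp (↑θ * I) * ξ)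
      + ↑ξ * Complex.exp (↑θ * I) ^ 2 * g' (Complex.exp (↑θ * I) * ξ)) with hv
  have hvc : Continuous (fun p : ℝ × ℝ => v p.2 p.1) := by
    have he : Continuous (fun p : ℝ × ℝ => Complex.exp (↑p.2 * I)) :=
      Complex.continuous_exp.comp ((Complex.continuous_ofReal.comp continuous_snd).mul
        continuous_const)
    have hx : Continuous (fun p : ℝ × ℝ => Complex.exp (↑p.2 * I) * ↑p.1) :=
      he.mul (Complex.continuous_ofReal.comp continuous_fst)
    exact continuous_const.mul ((he.mul (hgc.comp hx)).add
      (((Complex.continuous_ofReal.comp continuous_fst).mul (he.pow 2)).mul (hg'c.comp hx)))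
  have lhs : (∫ ξ in (0:ℝ)..R, Complex.exp (↑α * I) * g (Complex.exp (↑α * I) * ξ)) -
      (∫ ξ in (0:ℝ)..R, g ξ) = ∫ ξ in (0:ℝ)..R, ∫ θ in (0:ℝ)..α, v θ ξ := by
    rw [← intervalIntegral.integral_sub]
    · apply intervalIntegral.integral_congr
      intro ξ _
      exact sector_step1 g g' hg hgc hg'c α ξ
    · exact ((continuous_const.mul (hgc.comp (continuous_const.mul
        Complex.continuous_ofReal)))).intervalIntegrable _ _
    · exact hgc.comp Complex.continuous_ofReal |>.intervalIntegrable _ _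
  rw [lhs]
  have swap : (∫ ξ in (0:ℝ)..R, ∫ θ in (0:ℝ)..α, v θ ξ)
      = ∫ θ in (0:ℝ)..α, ∫ ξ in (0:ℝ)..R, v θ ξ := by
    rw [intervalIntegral.integral_of_le hR, intervalIntegral.integral_of_le hα]
    simp_rw [intervalIntegral.integral_of_le hα, intervalIntegral.integral_of_le hR]
    have hint : Integrable (Function.uncurry (fun ξ θ : ℝ => v θ ξ))
        ((volume.restrict (Set.Ioc 0 R)).prod (volume.restrict (Set.Ioc 0 α))) := by
      rw [Measure.prod_restrict, ← Measure.volume_eq_prod]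
      have h3 : IntegrableOn (fun p : ℝ × ℝ => v p.2 p.1)
          (Set.Icc 0 R ×ˢ Set.Icc 0 α) volume :=
        hvc.locallyIntegrable.integrableOn_isCompact (isCompact_Icc.prod isCompact_Icc)
      exact h3.mono_set (Set.prod_mono Set.Ioc_subset_Icc_self Set.Ioc_subset_Icc_self)
    exact MeasureTheory.integral_integral_swap hint
  rw [swap]
  apply intervalIntegral.integral_congr
  intro θ _
  exact sector_step3 g g' hg hgc hg'c R θ


set_option maxHeartbeats 2000000 in
theorem stmt8 (n : ℕ) (hn : 3 ≤ n) (hnodd : Odd n) (𝔨 : ℝ) (h𝔨 : 0 < 𝔨) (𝔩 : ℝ) :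
    IntegrableOn (fun ξ : ℝ =>
      Complex.exp (-((𝔨 * ξ ^ n : ℝ) : ℂ) +
        Complex.exp (-(Complex.I * π * ((n : ℂ) - 1) / (2 * n))) * (𝔩 : ℂ) * (ξ : ℂ)))
      (Set.Ioi 0) ∧
    Tendsto (fun R : ℝ => ∫ w in (-R)..R,
        Complex.exp (Complex.I * ((𝔨 : ℂ) * (w : ℂ) ^ n - (𝔩 : ℂ) * (w : ℂ))))
      atTop
      (nhds (((2 * (Complex.exp (Complex.I * π / (2 * n)) *
        ∫ ξ in Set.Ioi (0 : ℝ),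
          Complex.exp (-((𝔨 * ξ ^ n : ℝ) : ℂ) +
            Complex.exp (-(Complex.I * π * ((n : ℂ) - 1) / (2 * n))) *
              (𝔩 : ℂ) * (ξ : ℂ)))).re : ℝ) : ℂ)) := by
  have hn0 : (n : ℝ) ≠ 0 := by positivity
  have hn0' : (n : ℂ) ≠ 0 := by exact_mod_cast Nat.cast_ne_zero.2 (by omega)
  set c : ℂ := Complex.exp (-(Complex.I * π * ((n : ℂ) - 1) / (2 * n))) with hc
  set h : ℝ → ℂ := fun ξ => Complex.exp (-((𝔨 * ξ ^ n : ℝ) : ℂ) + c * (𝔩 : ℂ) * (ξ : ℂ)) with hh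
  -- norm of c is 1
  have hcnorm : ‖c‖ = 1 := by
    have : -(Complex.I * (π:ℂ) * ((n : ℂ) - 1) / (2 * n))
        = ((-(π * ((n:ℝ) - 1) / (2 * n)) : ℝ) : ℂ) * Complex.I := by
      push_cast
      ring
    rw [hc, this, Complex.norm_exp_ofReal_mul_I]
  -- norm of h
  have hnormh : ∀ ξ : ℝ, 0 ≤ ξ → ‖h ξ‖ ≤ Real.exp (-(𝔨 * ξ ^ n) + |𝔩| * ξ) := by
    intro ξ hξ
    rw [hh]
    simp only
    rw [Complex.norm_exp]
    apply Real.exp_le_exp.2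
    rw [Complex.add_re, Complex.neg_re, Complex.ofReal_re]
    gcongr
    calc (c * (𝔩:ℂ) * (ξ:ℂ)).re ≤ ‖c * (𝔩:ℂ) * (ξ:ℂ)‖ := Complex.re_le_norm _
      _ = |𝔩| * ξ := by
          rw [norm_mul, norm_mul, hcnorm, Complex.norm_real, Complex.norm_real, one_mul, Real.norm_eq_abs, Real.norm_eq_abs,
            _root_.abs_of_nonneg hξ]
  have hhc : Continuous h := by
    rw [hh]
    apply Complex.continuous_exp.comp
    fun_prop
  -- Part 1: integrability
  have hint : IntegrableOn h (Set.Ioi 0) := by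
    set T : ℝ := max 1 ((|𝔩| + 1) / 𝔨) with hT
    have hT1 : (1:ℝ) ≤ T := le_max_left _ _
    have hT0 : (0:ℝ) ≤ T := by linarith
    rw [← Set.Ioc_union_Ioi_eq_Ioi hT0]
    apply IntegrableOn.union
    · exact (hhc.locallyIntegrable.integrableOn_isCompact isCompact_Icc).mono_set
        Set.Ioc_subset_Icc_self
    · apply Integrable.mono (exp_neg_integrableOn_Ioi T one_pos)
        (hhc.aestronglyMeasurable.restrict)
      filter_upwards [ae_restrict_mem measurableSet_Ioi] with ξ hξ
      have hξT : T < ξ := hξ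
      have hξ1 : (1:ℝ) ≤ ξ := le_trans hT1 hξT.le
      have hξ0 : (0:ℝ) ≤ ξ := by linarith
      have key : -(𝔨 * ξ ^ n) + |𝔩| * ξ ≤ -ξ := by
        have h1 : ξ ≤ ξ ^ (n - 1) := le_self_pow₀ hξ1 (by omega)
        have h2 : (|𝔩| + 1) / 𝔨 ≤ ξ ^ (n - 1) := le_trans (le_trans (le_max_right _ _) hξT.le) h1
        have h3 : (|𝔩| + 1) ≤ 𝔨 * ξ ^ (n - 1) := by
          rw [div_le_iff₀ h𝔨] at h2; linarith [h2]
        have h4 : (|𝔩| + 1) * ξ ≤ 𝔨 * ξ ^ (n - 1) * ξ := by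
          apply mul_le_mul_of_nonneg_right h3 hξ0
        have h5 : ξ ^ (n - 1) * ξ = ξ ^ n := by
          rw [← pow_succ]
          congr 1
          omega
        nlinarith [h4, h5]
      calc ‖h ξ‖ ≤ Real.exp (-(𝔨 * ξ ^ n) + |𝔩| * ξ) := hnormh ξ hξ0
        _ ≤ Real.exp (-ξ) := Real.exp_le_exp.2 key
        _ ≤ ‖Real.exp (-1 * ξ)‖ := by rw [Real.norm_eq_abs, abs_of_pos (Real.exp_pos _)]
                                      simp
  constructor
  · exact hint
  -- Part 2: the limit
  set α : ℝ := π / (2 * n) with hα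
  have hpi : (0:ℝ) < π := Real.pi_pos
  have hnpos : (0:ℝ) < n := by positivity
  have hα0 : 0 < α := by rw [hα]; positivity
  set G : ℂ → ℂ := fun z => Complex.exp (Complex.I * ((𝔨:ℂ) * z ^ n - (𝔩:ℂ) * z)) with hG
  set G' : ℂ → ℂ := fun z => Complex.exp (Complex.I * ((𝔨:ℂ) * z ^ n - (𝔩:ℂ) * z)) *
      (Complex.I * ((𝔨:ℂ) * ((n:ℂ) * z ^ (n-1)) - (𝔩:ℂ) * 1)) with hG'
  have hGd : ∀ z, HasDerivAt G (G' z) z := by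
    intro z
    have h1 : HasDerivAt (fun z : ℂ => Complex.I * ((𝔨:ℂ) * z ^ n - (𝔩:ℂ) * z))
        (Complex.I * ((𝔨:ℂ) * ((n:ℂ) * z ^ (n-1)) - (𝔩:ℂ) * 1)) z :=
      (((hasDerivAt_pow n z).const_mul _).sub ((hasDerivAt_id z).const_mul _)).const_mul _
    exact h1.cexp
  have hGc : Continuous G := Complex.continuous_exp.comp (by fun_prop)
  have hG'c : Continuous G' := (Complex.continuous_exp.comp (by fun_prop)).mul (by fun_prop)
  clear_value G G'
  -- symmetry
  have hsym : ∀ R : ℝ, (∫ w in (-R)..R, G ↑w) = ((2 * (∫ ξ in (0:ℝ)..R, G ↑ξ).re : ℝ) : ℂ) := by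
    intro R
    have hGneg : ∀ ξ : ℝ, G (-(ξ:ℂ)) = (starRingEnd ℂ) (G ↑ξ) := by
      intro ξ
      rw [hG]
      simp only
      rw [← Complex.exp_conj]
      congr 1
      rw [hnodd.neg_pow]
      simp [map_mul, map_sub, Complex.conj_I, Complex.conj_ofReal]
      ring
    have h1 : (∫ w in (-R)..(0:ℝ), G ↑w) = (starRingEnd ℂ) (∫ ξ in (0:ℝ)..R, G ↑ξ) := by
      have := intervalIntegral.integral_comp_neg (a := (0:ℝ)) (b := R) (fun x : ℝ => G ↑x)
      rw [neg_zero] at this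
      rw [← this]
      have hconj : ∀ (f : ℝ → ℂ) (a b : ℝ), (∫ x in a..b, (starRingEnd ℂ) (f x))
          = (starRingEnd ℂ) (∫ x in a..b, f x) := by
        intro f a b
        simp only [intervalIntegral]
        rw [integral_conj, integral_conj, map_sub]
      rw [← hconj]
      apply intervalIntegral.integral_congr
      intro ξ _
      show G ↑(-ξ) = _
      rw [Complex.ofReal_neg, hGneg ξ]
    have h2 : (∫ w in (-R)..R, G ↑w) = (∫ w in (-R)..(0:ℝ), G ↑w) + ∫ ξ in (0:ℝ)..R, G ↑ξ :=
      (intervalIntegral.integral_add_adjacent_intervals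
        ((hGc.comp Complex.continuous_ofReal).intervalIntegrable _ _)
        ((hGc.comp Complex.continuous_ofReal).intervalIntegrable _ _)).symm
    rw [h2, h1, add_comm, Complex.add_conj]
  -- rotation identity
  have hexpnα : (n:ℂ) * ((α:ℂ) * Complex.I) = ((π/2 : ℝ) : ℂ) * Complex.I := by
    rw [hα]; push_cast; field_simp
  have hexpI : Complex.exp (((π/2 : ℝ) : ℂ) * Complex.I) = Complex.I := by
    rw [Complex.exp_mul_I, ← Complex.ofReal_cos, ← Complex.ofReal_sin,
      Real.cos_pi_div_two, Real.sin_pi_div_two]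
    simp
  have f1 : Complex.I * (Complex.exp ((α:ℂ) * Complex.I)) ^ n = -1 := by
    rw [← Complex.exp_nat_mul, hexpnα, hexpI, Complex.I_mul_I]
  have f2 : Complex.I * Complex.exp ((α:ℂ) * Complex.I) = -c := by
    have h1 : -(Complex.I * (π:ℂ) * ((n : ℂ) - 1) / (2 * n))
        = ((α - π/2 : ℝ) : ℂ) * Complex.I := by
      rw [hα]; push_cast; field_simp; ring
    rw [hc, h1, Complex.ofReal_sub, sub_mul, Complex.exp_sub, hexpI]
    field_simp [Complex.I_ne_zero]
    ring
    exact Complex.I_sq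
  have hrot : ∀ ξ : ℝ, G (Complex.exp ((α:ℂ) * Complex.I) * ↑ξ) = h ξ := by
    intro ξ
    rw [hG, hh]
    simp only
    congr 1
    rw [mul_pow]
    push_cast
    linear_combination ((𝔨:ℂ) * (ξ:ℂ)^n) * f1 - ((𝔩:ℂ) * (ξ:ℂ)) * f2
  -- real part of the arc exponent
  have hre : ∀ R θ : ℝ, (Complex.I * ((𝔨:ℂ) * (Complex.exp ((θ:ℂ) * Complex.I) * ↑R) ^ n
      - (𝔩:ℂ) * (Complex.exp ((θ:ℂ) * Complex.I) * ↑R))).re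
      = -(𝔨 * R ^ n * Real.sin (n * θ)) + 𝔩 * R * Real.sin θ := by
    intro R θ
    rw [mul_pow, ← Complex.exp_nat_mul,
      show (n:ℂ) * ((θ:ℂ) * Complex.I) = ((n * θ : ℝ) : ℂ) * Complex.I by push_cast; ring,
      Complex.exp_mul_I, Complex.exp_mul_I]
    simp only [← Complex.ofReal_pow, ← Complex.ofReal_cos, ← Complex.ofReal_sin]
    simp only [Complex.mul_re, Complex.mul_im, Complex.add_re, Complex.add_im, Complex.sub_re,
      Complex.sub_im, Complex.I_re, Complex.I_im, Complex.ofReal_re, Complex.ofReal_im]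
    ring
  have hnormarc : ∀ R θ : ℝ, 0 ≤ R →
      ‖Complex.I * ↑R * Complex.exp ((θ:ℂ) * Complex.I)
        * G (Complex.exp ((θ:ℂ) * Complex.I) * ↑R)‖
      = R * Real.exp (-(𝔨 * R ^ n * Real.sin (n * θ)) + 𝔩 * R * Real.sin θ) := by
    intro R θ hR
    rw [hG]
    simp only
    rw [norm_mul, norm_mul, norm_mul, Complex.norm_I, Complex.norm_real,
      Complex.norm_exp_ofReal_mul_I, Complex.norm_exp, hre, one_mul, mul_one, Real.norm_eq_abs, _root_.abs_of_nonneg hR]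
  -- bound on the arc integral for large R
  set R₀ : ℝ := max 1 (2 * |𝔩| / 𝔨) with hR₀
  have harcbound : ∀ R : ℝ, R₀ ≤ R →
      ‖∫ θ in (0:ℝ)..α, Complex.I * ↑R * Complex.exp ((θ:ℂ) * Complex.I)
          * G (Complex.exp ((θ:ℂ) * Complex.I) * ↑R)‖
        ≤ 2 / 𝔨 * (R ^ (n-1))⁻¹ := by
    intro R hR
    have hR1 : (1:ℝ) ≤ R := le_trans (le_max_left _ _) hR
    have hR0 : (0:ℝ) < R := by linarith
    have hRn : R ^ n = R ^ (n-1) * R := by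
      rw [← pow_succ]
      congr 1
      omega
    have hC : 2 * |𝔩| ≤ 𝔨 * R ^ (n-1) := by
      have h1 : 2 * |𝔩| / 𝔨 ≤ R := le_trans (le_max_right _ _) hR
      have h2 : R ≤ R ^ (n-1) := le_self_pow₀ hR1 (by omega)
      rw [div_le_iff₀ h𝔨] at h1
      nlinarith
    set k : ℝ := 𝔨 * R ^ n / 2 with hk
    have hk0 : 0 < k := by rw [hk]; positivity
    have hαπ : α ≤ π / 2 := by
      rw [hα]
      rw [div_le_div_iff₀ (by positivity) (by norm_num)]
      nlinarith [hpi, show (1:ℝ) ≤ (n:ℝ) by exact_mod_cast Nat.one_le_cast.2 (by omega)]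
    have hbound : ∀ θ ∈ Set.uIoc (0:ℝ) α,
        ‖Complex.I * ↑R * Complex.exp ((θ:ℂ) * Complex.I)
          * G (Complex.exp ((θ:ℂ) * Complex.I) * ↑R)‖ ≤ R * Real.exp (-k * θ) := by
      intro θ hθ
      rw [Set.uIoc_of_le hα0.le] at hθ
      obtain ⟨hθ0, hθα⟩ := hθ
      rw [hnormarc R θ hR0.le]
      have hnθ : n * θ ≤ π / 2 := by
        calc (n:ℝ) * θ ≤ n * α := by
              apply mul_le_mul_of_nonneg_left hθα (by positivity)
          _ = π / 2 := by rw [hα]; field_simp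
      have hs : 2 / π * (n * θ) ≤ Real.sin (n * θ) :=
        Real.mul_le_sin (by positivity) hnθ
      have hs' : 2 * (n * θ) ≤ π * Real.sin (n * θ) := by
        rw [div_mul_eq_mul_div, div_le_iff₀ hpi] at hs
        linarith
      have hθs : θ ≤ Real.sin (n * θ) := by
        have hn3 : (3:ℝ) ≤ (n:ℝ) := by exact_mod_cast Nat.ofNat_le_cast.2 hn
        nlinarith [Real.pi_le_four, hθ0.le, Real.pi_pos]
      have hsinθ : Real.sin θ ≤ θ := Real.sin_le hθ0.le
      have hsinθ0 : 0 ≤ Real.sin θ :=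
        Real.sin_nonneg_of_nonneg_of_le_pi hθ0.le (by linarith [hpi])
      have hexp : -(𝔨 * R ^ n * Real.sin (n * θ)) + 𝔩 * R * Real.sin θ ≤ -k * θ := by
        rw [hk]
        have hl1 : 𝔩 * R * Real.sin θ ≤ |𝔩| * R * θ := by
          have h1 : 𝔩 ≤ |𝔩| := le_abs_self 𝔩
          have e1 : 𝔩 * (R * Real.sin θ) ≤ |𝔩| * (R * Real.sin θ) :=
            mul_le_mul_of_nonneg_right h1 (mul_nonneg hR0.le hsinθ0)
          have e2 : |𝔩| * (R * Real.sin θ) ≤ |𝔩| * (R * θ) :=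
            mul_le_mul_of_nonneg_left (mul_le_mul_of_nonneg_left hsinθ hR0.le) (abs_nonneg 𝔩)
          calc 𝔩 * R * Real.sin θ = 𝔩 * (R * Real.sin θ) := by ring
            _ ≤ |𝔩| * (R * θ) := le_trans e1 e2
            _ = |𝔩| * R * θ := by ring
        have hl2 : |𝔩| * R * θ ≤ 𝔨 * R ^ n / 2 * θ := by
          rw [hRn]
          have e3 : (2 * |𝔩|) * (R * θ) ≤ (𝔨 * R ^ (n-1)) * (R * θ) :=
            mul_le_mul_of_nonneg_right hC (mul_nonneg hR0.le hθ0.le)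
          nlinarith [e3]
        have hl3 : -(𝔨 * R ^ n * Real.sin (n * θ)) ≤ -(𝔨 * R ^ n) * θ := by
          nlinarith [hθs, show (0:ℝ) ≤ 𝔨 * R ^ n by positivity]
        nlinarith
      gcongr
    have hbint : IntervalIntegrable (fun θ : ℝ => R * Real.exp (-k * θ)) volume 0 α :=
      (Continuous.intervalIntegrable (by fun_prop) _ _)
    have h1 : ‖∫ θ in (0:ℝ)..α, Complex.I * ↑R * Complex.exp ((θ:ℂ) * Complex.I)
          * G (Complex.exp ((θ:ℂ) * Complex.I) * ↑R)‖
        ≤ |∫ θ in (0:ℝ)..α, R * Real.exp (-k * θ)| :=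
      intervalIntegral.norm_integral_le_abs_of_norm_le
        (ae_restrict_of_forall_mem measurableSet_uIoc hbound) hbint
    -- compute the bounding integral
    have hder : ∀ θ : ℝ, HasDerivAt (fun θ : ℝ => -(R/k) * Real.exp (-k * θ))
        (R * Real.exp (-k * θ)) θ := by
      intro θ
      have h2 : HasDerivAt (fun θ : ℝ => -k * θ) (-k) θ := by
        simpa using (hasDerivAt_id θ).const_mul (-k)
      have h3 := (Real.hasDerivAt_exp (-k * θ)).comp θ h2
      have h4 : HasDerivAt (fun θ : ℝ => -(R/k) * Real.exp (-k * θ)) (-(R / k) * (Real.exp (-k * θ) * -k)) θ := h3.const_mul (-(R/k))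
      convert h4 using 1
      field_simp
    have hval : (∫ θ in (0:ℝ)..α, R * Real.exp (-k * θ))
        = -(R/k) * Real.exp (-k * α) + R/k := by
      rw [intervalIntegral.integral_eq_sub_of_hasDerivAt (fun θ _ => hder θ)
        ((Continuous.intervalIntegrable (by fun_prop) _ _))]
      simp
    have hval2 : |∫ θ in (0:ℝ)..α, R * Real.exp (-k * θ)| ≤ R / k := by
      rw [hval]
      have hexp0 := (Real.exp_pos (-k * α)).le
      have hexp1 : Real.exp (-k * α) ≤ 1 := by
        rw [Real.exp_le_one_iff]
        nlinarith
      have hRk : 0 < R / k := by positivity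
      rw [_root_.abs_of_nonneg (by nlinarith)]
      nlinarith
    have hfin : R / k = 2 / 𝔨 * (R ^ (n-1))⁻¹ := by
      rw [hk, hRn]
      have hRp : (0:ℝ) < R ^ (n-1) := by positivity
      field_simp
    exact h1.trans (hval2.trans_eq hfin)
  -- limits
  have htendh : Tendsto (fun R : ℝ => ∫ ξ in (0:ℝ)..R, h ξ) atTop
      (nhds (∫ ξ in Set.Ioi (0:ℝ), h ξ)) :=
    intervalIntegral_tendsto_integral_Ioi 0 hint tendsto_id
  have harc0 : Tendsto (fun R : ℝ => ∫ θ in (0:ℝ)..α,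
      Complex.I * ↑R * Complex.exp ((θ:ℂ) * Complex.I)
        * G (Complex.exp ((θ:ℂ) * Complex.I) * ↑R)) atTop (nhds 0) := by
    have h2 : Tendsto (fun R : ℝ => 2 / 𝔨 * (R ^ (n-1))⁻¹) atTop (nhds 0) := by
      have h3 := (tendsto_pow_atTop (α := ℝ) (n := n-1) (by omega)).inv_tendsto_atTop.const_mul
        (2 / 𝔨)
      simpa using h3
    apply squeeze_zero_norm' ?_ h2
    filter_upwards [eventually_ge_atTop R₀] with R hR
    exact harcbound R hR
  have hαI : ((α:ℝ):ℂ) * Complex.I = Complex.I * ↑π / (2 * (n:ℂ)) := by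
    rw [hα]; push_cast; ring
  have hG0R : Tendsto (fun R : ℝ => ∫ ξ in (0:ℝ)..R, G ↑ξ) atTop
      (nhds (Complex.exp (Complex.I * ↑π / (2 * (n:ℂ))) * ∫ ξ in Set.Ioi (0:ℝ), h ξ)) := by
    have heq : (fun R : ℝ => Complex.exp ((α:ℂ) * Complex.I) * (∫ ξ in (0:ℝ)..R, h ξ)
        - (∫ θ in (0:ℝ)..α, Complex.I * ↑R * Complex.exp ((θ:ℂ) * Complex.I)
            * G (Complex.exp ((θ:ℂ) * Complex.I) * ↑R)))
        =ᶠ[atTop] (fun R : ℝ => ∫ ξ in (0:ℝ)..R, G ↑ξ) := by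
      filter_upwards [eventually_ge_atTop (0:ℝ)] with R hR
      have hs := sector_eq G G' hGd hGc hG'c R α hR hα0.le
      have e1 : (∫ ξ in (0:ℝ)..R, Complex.exp ((α:ℂ) * Complex.I)
          * G (Complex.exp ((α:ℂ) * Complex.I) * ↑ξ))
          = Complex.exp ((α:ℂ) * Complex.I) * ∫ ξ in (0:ℝ)..R, h ξ := by
        rw [← intervalIntegral.integral_const_mul]
        apply intervalIntegral.integral_congr
        intro ξ _
        show Complex.exp ((α:ℂ) * Complex.I) * G (Complex.exp ((α:ℂ) * Complex.I) * ↑ξ)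
          = Complex.exp ((α:ℂ) * Complex.I) * h ξ
        rw [hrot ξ]
      rw [e1] at hs
      linear_combination hs
    have hfin := (htendh.const_mul (Complex.exp ((α:ℂ) * Complex.I))).sub harc0
    have hfin2 := hfin.congr' heq
    rw [sub_zero, hαI] at hfin2
    exact hfin2
  have t1 := (Complex.continuous_re.tendsto _).comp hG0R
  have t2 := t1.const_mul (2:ℝ)
  have t3 := (Complex.continuous_ofReal.tendsto _).comp t2
  have t4 : Tendsto (fun R : ℝ => ((2 * (∫ ξ in (0:ℝ)..R, G ↑ξ).re : ℝ) : ℂ)) atTop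
      (nhds ((((2 * (Complex.exp (Complex.I * ↑π / (2 * (n:ℂ))) *
        ∫ ξ in Set.Ioi (0:ℝ), h ξ)).re : ℝ) : ℂ))) := by
    have e : ((2 * (Complex.exp (Complex.I * ↑π / (2 * (n:ℂ))) *
        ∫ ξ in Set.Ioi (0:ℝ), h ξ)).re : ℝ)
        = 2 * (Complex.exp (Complex.I * ↑π / (2 * (n:ℂ))) *
            ∫ ξ in Set.Ioi (0:ℝ), h ξ).re := by
      rw [Complex.mul_re]
      norm_num
    rw [e]
    exact t3
  refine t4.congr fun R => ?_
  rw [← hsym R]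
  apply intervalIntegral.integral_congr
  intro w _
  rw [hG]
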